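/- Let n ≥ 3, m ≥ 1, and let X(t) = ∑_{k=0}^{n−1} a_k e^{λ_{m,k}t} P_k be the solution to the semi-discrete polyharmonic flow with λ_{m,k} = −4^m sin^{2m}(πk/n). Define the rescaled polygon Y(t) = e^{−λ_{m,1}t}(X(t) − a_0·(1,…,1)^T). Then Y(t) → a_1 P_1 + a_{n−1} P_{n−1} as t → ∞. -/

import Mathlib

open Complex Real Filter

/-- The discrete Fourier vector P_k. -/
noncomputable def fourierP (n : ℕ) (k : Fin n) : Fin n → ℂ :=
  fun j => Complex.exp (2 * Real.pi * Complex.I / n) ^ ((j : ℕ) * (k : ℕ))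

/-- The eigenvalue λ_{m,k} = −4^m sin^{2m}(πk/n). -/
noncomputable def lam (n m k : ℕ) : ℝ := -(4 : ℝ) ^ m * Real.sin (Real.pi * k / n) ^ (2 * m)

/-- The explicit solution of the planar semi-discrete polyharmonic flow. -/
noncomputable def polySol (n m : ℕ) (a : Fin n → ℂ) (t : ℝ) : Fin n → ℂ :=
  ∑ k : Fin n, (a k * Complex.exp (lam n m k * t)) • fourierP n k

lemma lam_zero (n m : ℕ) (hm : 1 ≤ m) : lam n m 0 = 0 := by
  have h : 2 * m ≠ 0 := by omega
  simp [lam, h]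

lemma lam_last (n m : ℕ) (hn : 3 ≤ n) : lam n m (n - 1) = lam n m 1 := by
  have hn0 : (n : ℝ) ≠ 0 := Nat.cast_ne_zero.mpr (by omega)
  unfold lam
  congr 2
  have h1 : ((n - 1 : ℕ) : ℝ) = (n : ℝ) - 1 := by
    rw [Nat.cast_sub (by omega)]; norm_num
  rw [h1]
  have h2 : Real.pi * ((n : ℝ) - 1) / n = Real.pi - Real.pi * 1 / n := by
    field_simp
  rw [h2, Real.sin_pi_sub]
  norm_num

lemma sin_one_lt (n k : ℕ) (hn : 3 ≤ n) (h2 : 2 ≤ k) (hk : k ≤ n - 2) :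
    Real.sin (Real.pi * 1 / n) < Real.sin (Real.pi * k / n) := by
  have hπ := Real.pi_pos
  have hn0 : (0 : ℝ) < n := by exact_mod_cast (by omega : 0 < n)
  have hn3 : (3 : ℝ) ≤ n := by exact_mod_cast hn
  have hkn : (k : ℝ) + 2 ≤ n := by exact_mod_cast (by omega : k + 2 ≤ n)
  have h1k : (1 : ℝ) < k := by exact_mod_cast (by omega : 1 < k)
  have hx1 : 0 < Real.pi * 1 / n := by positivity
  have hx1half : Real.pi * 1 / n ≤ Real.pi / 2 := by
    rw [div_le_div_iff₀ hn0 two_pos]; nlinarith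
  have hmemlo : -(Real.pi / 2) ≤ Real.pi * 1 / n := by linarith
  by_cases hc : Real.pi * k / n ≤ Real.pi / 2
  · have hlt : Real.pi * 1 / n < Real.pi * k / n := by
      rw [div_lt_div_iff₀ hn0 hn0]
      nlinarith [mul_pos (mul_pos hπ hn0) (sub_pos.mpr h1k)]
    exact Real.strictMonoOn_sin ⟨hmemlo, hx1half⟩
      ⟨by linarith, hc⟩ hlt
  · push_neg at hc
    rw [← Real.sin_pi_sub (Real.pi * k / n)]
    have heq : Real.pi - Real.pi * k / n = Real.pi * ((n : ℝ) - k) / n := by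
      field_simp
    have hlt : Real.pi * 1 / n < Real.pi * ((n : ℝ) - k) / n := by
      rw [div_lt_div_iff₀ hn0 hn0]
      nlinarith [mul_pos (mul_pos hπ hn0) (show (0:ℝ) < (n : ℝ) - k - 1 by linarith)]
    rw [heq]
    refine Real.strictMonoOn_sin ⟨hmemlo, hx1half⟩ ⟨?_, ?_⟩ hlt
    · linarith
    · rw [← heq]; linarith

lemma lam_lt (n m : ℕ) (hn : 3 ≤ n) (hm : 1 ≤ m) {k : ℕ} (h2 : 2 ≤ k) (hk : k ≤ n - 2) :
    lam n m k < lam n m 1 := by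
  have hπ := Real.pi_pos
  have hn0 : (0 : ℝ) < n := by exact_mod_cast (by omega : 0 < n)
  have hn3 : (3 : ℝ) ≤ n := by exact_mod_cast hn
  have hs1pos : 0 < Real.sin (Real.pi * 1 / n) := by
    apply Real.sin_pos_of_pos_of_lt_pi
    · positivity
    · rw [div_lt_iff₀ hn0]
      nlinarith [mul_pos hπ (show (0:ℝ) < (n:ℝ) - 1 by linarith)]
  have hsin := sin_one_lt n k hn h2 hk
  have hpow : Real.sin (Real.pi * 1 / n) ^ (2 * m) < Real.sin (Real.pi * k / n) ^ (2 * m) :=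
    pow_lt_pow_left₀ hsin hs1pos.le (by omega)
  have h4 : (0 : ℝ) < 4 ^ m := by positivity
  unfold lam
  nlinarith [hpow, h4]

theorem rescaled_flow_limit (n m : ℕ) [NeZero n] (hn : 3 ≤ n) (hm : 1 ≤ m)
    (a : Fin n → ℂ) :
    Tendsto (fun t : ℝ =>
        Real.exp (-(lam n m 1) * t) • (polySol n m a t - a 0 • fourierP n 0))
      atTop (nhds (a 1 • fourierP n 1 + a (-1) • fourierP n (-1))) := by
  obtain ⟨n', rfl⟩ : ∃ n', n = n' + 3 := ⟨n - 3, by omega⟩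
  have hval1 : ((1 : Fin (n' + 3)) : ℕ) = 1 := rfl
  have hvalneg : ((-1 : Fin (n' + 3)) : ℕ) = n' + 2 := Fin.coe_neg_one
  have hone_ne_zero : (1 : Fin (n' + 3)) ≠ 0 := by
    intro h; exact absurd (congrArg Fin.val h) (by simp [hval1])
  have hneg_ne_zero : (-1 : Fin (n' + 3)) ≠ 0 := by
    intro h; exact absurd (congrArg Fin.val h) (by simp [hvalneg])
  have hneg_ne_one : (-1 : Fin (n' + 3)) ≠ 1 := by
    intro h; exact absurd (congrArg Fin.val h) (by simp [hvalneg, hval1])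
  set s : Finset (Fin (n' + 3)) := Finset.univ.erase 0 with hs
  set L : Fin (n' + 3) → Fin (n' + 3) → ℂ := fun k =>
    if k = 1 then a 1 • fourierP (n' + 3) 1
    else if k = -1 then a (-1) • fourierP (n' + 3) (-1) else 0 with hL
  have hsmul : ∀ (r : ℝ) (c : ℂ) (v : Fin (n' + 3) → ℂ), r • (c • v) = ((r : ℂ) * c) • v := by
    intro r c v
    rw [← algebraMap_smul ℂ r (c • v), Complex.coe_algebraMap, smul_smul]
  have hF : (fun t : ℝ =>
        Real.exp (-(lam (n' + 3) m 1) * t) • (polySol (n' + 3) m a t - a 0 • fourierP (n' + 3) 0))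
      = fun t => ∑ k ∈ s,
          (a k * Complex.exp (((lam (n' + 3) m k - lam (n' + 3) m 1) * t : ℝ) : ℂ)) •
          fourierP (n' + 3) k := by
    funext t
    unfold polySol
    rw [← Finset.add_sum_erase Finset.univ _ (Finset.mem_univ (0 : Fin (n' + 3)))]
    have h00 : ((0 : Fin (n' + 3)) : ℕ) = 0 := rfl
    rw [h00, lam_zero (n' + 3) m hm]
    simp only [Complex.ofReal_zero, zero_mul]
    rw [Complex.exp_zero, mul_one, add_sub_cancel_left, Finset.smul_sum]
    refine Finset.sum_congr rfl fun k hk => ?_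
    rw [hsmul]
    congr 1
    rw [Complex.ofReal_exp]
    have hcast : (↑(-(lam (n' + 3) m 1) * t) : ℂ) + ↑(lam (n' + 3) m ↑k) * ↑t
        = (((lam (n' + 3) m ↑k - lam (n' + 3) m 1) * t : ℝ) : ℂ) := by push_cast; ring
    calc Complex.exp ↑(-(lam (n' + 3) m 1) * t) *
          (a k * Complex.exp (↑(lam (n' + 3) m ↑k) * ↑t))
        = a k * (Complex.exp ↑(-(lam (n' + 3) m 1) * t) *
            Complex.exp (↑(lam (n' + 3) m ↑k) * ↑t)) := by ring
      _ = a k * Complex.exp (↑(-(lam (n' + 3) m 1) * t) + ↑(lam (n' + 3) m ↑k) * ↑t) := by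
          rw [Complex.exp_add]
      _ = _ := by rw [hcast]
  have key : ∀ k ∈ s, Tendsto
      (fun t : ℝ => (a k * Complex.exp (((lam (n' + 3) m k - lam (n' + 3) m 1) * t : ℝ) : ℂ)) •
        fourierP (n' + 3) k)
      atTop (nhds (L k)) := by
    intro k hk
    have hk0 : k ≠ 0 := Finset.ne_of_mem_erase hk
    by_cases h1 : k = 1
    · subst h1
      have hz : lam (n' + 3) m ((1 : Fin (n' + 3)) : ℕ) - lam (n' + 3) m 1 = 0 := by
        rw [hval1, sub_self]
      simp only [hz, zero_mul, Complex.ofReal_zero, Complex.exp_zero, mul_one]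
      simpa [hL] using tendsto_const_nhds
        (x := a 1 • fourierP (n' + 3) 1) (f := atTop (α := ℝ))
    by_cases h2 : k = -1
    · subst h2
      have hz : lam (n' + 3) m ((-1 : Fin (n' + 3)) : ℕ) - lam (n' + 3) m 1 = 0 := by
        rw [hvalneg]
        have he : n' + 2 = n' + 3 - 1 := by omega
        rw [he, lam_last (n' + 3) m (by omega), sub_self]
      simp only [hz, zero_mul, Complex.ofReal_zero, Complex.exp_zero, mul_one]
      simpa [hL, hneg_ne_one] using tendsto_const_nhds
        (x := a (-1) • fourierP (n' + 3) (-1)) (f := atTop (α := ℝ))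
    · have hv0 : (k : ℕ) ≠ 0 := fun h => hk0 (Fin.ext h)
      have hv1 : (k : ℕ) ≠ 1 := fun h => h1 (Fin.ext (by rw [h, hval1]))
      have hvn : (k : ℕ) ≠ n' + 2 := fun h => h2 (Fin.ext (by rw [h, hvalneg]))
      have hklt : (k : ℕ) < n' + 3 := k.isLt
      have hlt : lam (n' + 3) m ↑k < lam (n' + 3) m 1 :=
        lam_lt (n' + 3) m (by omega) hm (by omega) (by omega)
      have hc : lam (n' + 3) m ↑k - lam (n' + 3) m 1 < 0 := by linarith
      have hexp : Tendsto
          (fun t : ℝ => Complex.exp (((lam (n' + 3) m ↑k - lam (n' + 3) m 1) * t : ℝ) : ℂ))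
          atTop (nhds 0) := by
        rw [tendsto_zero_iff_norm_tendsto_zero]
        have hnorm : ∀ t : ℝ,
            ‖Complex.exp (((lam (n' + 3) m ↑k - lam (n' + 3) m 1) * t : ℝ) : ℂ)‖
            = Real.exp ((lam (n' + 3) m ↑k - lam (n' + 3) m 1) * t) := by
          intro t; rw [Complex.norm_exp, Complex.ofReal_re]
        simp only [hnorm]
        exact Real.tendsto_exp_atBot.comp ((tendsto_const_mul_atBot_of_neg hc).mpr tendsto_id)
      have hlim := ((tendsto_const_nhds (x := a k) (f := atTop (α := ℝ))).mul hexp).smul_const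
        (fourierP (n' + 3) k)
      rw [mul_zero, zero_smul] at hlim
      simpa [hL, h1, h2] using hlim
  rw [hF]
  have hlim := tendsto_finset_sum s key
  have hsum : ∑ k ∈ s, L k = a 1 • fourierP (n' + 3) 1 + a (-1) • fourierP (n' + 3) (-1) := by
    have h1s : (1 : Fin (n' + 3)) ∈ s := Finset.mem_erase.mpr ⟨hone_ne_zero, Finset.mem_univ _⟩
    have hns : (-1 : Fin (n' + 3)) ∈ s.erase 1 :=
      Finset.mem_erase.mpr ⟨hneg_ne_one, Finset.mem_erase.mpr ⟨hneg_ne_zero, Finset.mem_univ _⟩⟩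
    rw [← Finset.add_sum_erase s L h1s, ← Finset.add_sum_erase _ L hns]
    have hzero : ∑ k ∈ (s.erase 1).erase (-1), L k = 0 := by
      refine Finset.sum_eq_zero fun k hk => ?_
      have hk1 : k ≠ 1 := Finset.ne_of_mem_erase (Finset.mem_of_mem_erase hk)
      have hk2 : k ≠ -1 := Finset.ne_of_mem_erase hk
      simp [hL, hk1, hk2]
    rw [hzero, add_zero]
    simp [hL, hneg_ne_one]
  rwa [hsum] at hlim
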